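/- Let η₁,…,η_N be i.i.d. real random variables with E[η_k] = 0 and E[e^{η_k}] ≤ β and E[e^{−η_k}] ≤ β, and let a₁,…,a_N ∈ [0,1] be deterministic weights with Z = Σ a_k > 0. Define V = (1/Z) Σ_{k=1}^N a_k η_k. Then for every λ ∈ (0,1], P(|V| > λ) ≤ 2 exp(−λ² Z e^{−2β} / 4). -/

import Mathlib

open MeasureTheory ProbabilityTheory

private lemma exp_quad_nonpos {y : ℝ} (hy : y ≤ 0) :
    Real.exp y ≤ 1 + y + y ^ 2 / 2 := by
  set f : ℝ → ℝ := fun y => 1 + y + y ^ 2 / 2 - Real.exp y with hf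
  have hd : ∀ x, HasDerivAt f (1 + x - Real.exp x) x := by
    intro x
    have h1 : HasDerivAt (fun y : ℝ => 1 + y) 1 x := (hasDerivAt_id x).const_add 1
    have h2 : HasDerivAt (fun y : ℝ => y ^ 2 / 2) x x := by
      have := (hasDerivAt_pow 2 x).div_const 2
      refine this.congr_deriv ?_
      push_cast; ring
    have := (h1.add h2).sub (Real.hasDerivAt_exp x)
    exact this
  have hanti : Antitone f := by
    refine antitone_of_deriv_nonpos (fun x => (hd x).differentiableAt) (fun x => ?_)
    rw [(hd x).deriv]
    have := Real.add_one_le_exp x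
    linarith
  have h0 : f 0 = 0 := by simp [hf]
  have := hanti hy
  rw [h0] at this
  simp only [hf] at this
  linarith

private lemma exp_quad_nonneg {y : ℝ} (hy : 0 ≤ y) :
    Real.exp y ≤ 1 + y + y ^ 2 / 2 * Real.exp y := by
  set f : ℝ → ℝ := fun y => 1 + y + y ^ 2 / 2 * Real.exp y - Real.exp y with hf
  have hd : ∀ x, HasDerivAt f (1 + (x * Real.exp x + x ^ 2 / 2 * Real.exp x) - Real.exp x) x := by
    intro x
    have h1 : HasDerivAt (fun y : ℝ => 1 + y) 1 x := (hasDerivAt_id x).const_add 1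
    have h2 : HasDerivAt (fun y : ℝ => y ^ 2 / 2) x x := by
      have := (hasDerivAt_pow 2 x).div_const 2
      refine this.congr_deriv ?_
      push_cast; ring
    have h3 : HasDerivAt (fun y : ℝ => y ^ 2 / 2 * Real.exp y)
        (x * Real.exp x + x ^ 2 / 2 * Real.exp x) x := h2.mul (Real.hasDerivAt_exp x)
    exact (h1.add h3).sub (Real.hasDerivAt_exp x)
  have hmono : Monotone f := by
    refine monotone_of_deriv_nonneg (fun x => (hd x).differentiableAt) (fun x => ?_)
    rw [(hd x).deriv]
    have h1 : Real.exp x * (1 + -x) ≤ Real.exp x * Real.exp (-x) :=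
      mul_le_mul_of_nonneg_left (by linarith [Real.add_one_le_exp (-x)]) (Real.exp_pos x).le
    have h2 : Real.exp x * Real.exp (-x) = 1 := by
      rw [← Real.exp_add]; simp
    have h3 : 0 ≤ x ^ 2 * Real.exp x := mul_nonneg (sq_nonneg x) (Real.exp_pos x).le
    nlinarith
  have h0 : f 0 = 0 := by simp [hf]
  have := hmono hy
  rw [h0] at this
  simp only [hf] at this
  linarith

private lemma sq_le_exp' {v : ℝ} (hv : 0 ≤ v) : v ^ 2 ≤ Real.exp v := by
  have h1 : v / 2 ≤ Real.exp (v / 2 - 1) := by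
    have := Real.add_one_le_exp (v / 2 - 1); linarith
  have he : (2 : ℝ) ≤ Real.exp 1 := by
    have := Real.add_one_le_exp 1; linarith
  have h2 : v ≤ Real.exp (v / 2) := by
    have h3 : Real.exp (v / 2) = Real.exp 1 * Real.exp (v / 2 - 1) := by
      rw [← Real.exp_add]; congr 1; ring
    have h4 : 2 * (v / 2) ≤ Real.exp 1 * Real.exp (v / 2 - 1) := by
      have h5 : 2 * (v / 2) ≤ 2 * Real.exp (v / 2 - 1) := by linarith
      have h6 : 2 * Real.exp (v / 2 - 1) ≤ Real.exp 1 * Real.exp (v / 2 - 1) :=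
        mul_le_mul_of_nonneg_right he (Real.exp_pos _).le
      linarith
    rw [h3]; linarith
  calc v ^ 2 ≤ (Real.exp (v / 2)) ^ 2 := by
        apply pow_le_pow_left₀ hv h2
    _ = Real.exp v := by
        rw [sq, ← Real.exp_add]; congr 1; ring

/-- Pointwise key bound: for `t ∈ [0, 1/2]`,
`exp (t*x) ≤ 1 + t*x + 2 t² (exp x + exp (-x))`. -/
private lemma key_pointwise (t x : ℝ) (ht0 : 0 ≤ t) (ht : t ≤ 1 / 2) :
    Real.exp (t * x) ≤ 1 + t * x + 2 * t ^ 2 * (Real.exp x + Real.exp (-x)) := by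
  have habs : t * x ≤ t * |x| := mul_le_mul_of_nonneg_left (le_abs_self x) ht0
  have hstep : Real.exp (t * x) ≤ 1 + t * x + (t * x) ^ 2 / 2 * Real.exp (t * |x|) := by
    rcases le_or_gt 0 (t * x) with h | h
    · have h1 := exp_quad_nonneg h
      have h2 : (t * x) ^ 2 / 2 * Real.exp (t * x) ≤ (t * x) ^ 2 / 2 * Real.exp (t * |x|) :=
        mul_le_mul_of_nonneg_left (Real.exp_le_exp.mpr habs) (by positivity)
      linarith
    · have h1 := exp_quad_nonpos h.le
      have h2 : (1 : ℝ) ≤ Real.exp (t * |x|) :=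
        Real.one_le_exp (mul_nonneg ht0 (abs_nonneg x))
      nlinarith [sq_nonneg (t * x)]
  have h1 : t * |x| ≤ |x| / 2 := by nlinarith [abs_nonneg x]
  have h2 : x ^ 2 ≤ 4 * Real.exp (|x| / 2) := by
    have h3 := sq_le_exp' (v := |x| / 2) (by positivity)
    have h4 : (|x| / 2) ^ 2 = x ^ 2 / 4 := by rw [div_pow, sq_abs]; ring
    rw [h4] at h3; linarith
  have h5 : Real.exp |x| ≤ Real.exp x + Real.exp (-x) := by
    rcases abs_cases x with ⟨hx, _⟩ | ⟨hx, _⟩ <;> rw [hx] <;>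
      nlinarith [Real.exp_pos x, Real.exp_pos (-x)]
  have h6 : (t * x) ^ 2 / 2 * Real.exp (t * |x|)
      ≤ 2 * t ^ 2 * (Real.exp x + Real.exp (-x)) := by
    calc (t * x) ^ 2 / 2 * Real.exp (t * |x|)
        ≤ (t * x) ^ 2 / 2 * Real.exp (|x| / 2) :=
          mul_le_mul_of_nonneg_left (Real.exp_le_exp.mpr h1) (by positivity)
      _ = t ^ 2 / 2 * (x ^ 2 * Real.exp (|x| / 2)) := by ring
      _ ≤ t ^ 2 / 2 * ((4 * Real.exp (|x| / 2)) * Real.exp (|x| / 2)) := by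
          apply mul_le_mul_of_nonneg_left _ (by positivity)
          exact mul_le_mul_of_nonneg_right h2 (Real.exp_pos _).le
      _ = 2 * t ^ 2 * (Real.exp (|x| / 2) * Real.exp (|x| / 2)) := by ring
      _ = 2 * t ^ 2 * Real.exp |x| := by rw [← Real.exp_add]; ring_nf
      _ ≤ 2 * t ^ 2 * (Real.exp x + Real.exp (-x)) :=
          mul_le_mul_of_nonneg_left h5 (by positivity)
  linarith

/-- One-variable MGF bound. -/
private lemma onevar {Ω : Type*} [MeasurableSpace Ω] (μ : Measure Ω) [IsProbabilityMeasure μ]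
    (ξ : Ω → ℝ) (hm : Measurable ξ) (hi : Integrable ξ μ) (h0 : ∫ ω, ξ ω ∂μ = 0)
    (he : Integrable (fun ω => Real.exp (ξ ω)) μ)
    (he' : Integrable (fun ω => Real.exp (-(ξ ω))) μ)
    (β : ℝ) (hb : ∫ ω, Real.exp (ξ ω) ∂μ ≤ β) (hb' : ∫ ω, Real.exp (-(ξ ω)) ∂μ ≤ β)
    (t : ℝ) (ht0 : 0 ≤ t) (ht : t ≤ 1 / 2) :
    Integrable (fun ω => Real.exp (t * ξ ω)) μ ∧
      ∫ ω, Real.exp (t * ξ ω) ∂μ ≤ 1 + 4 * β * t ^ 2 := by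
  set G : Ω → ℝ := fun ω => 1 + t * ξ ω + 2 * t ^ 2 * (Real.exp (ξ ω) + Real.exp (-(ξ ω)))
    with hG
  have hGint : Integrable G μ :=
    (((integrable_const (1 : ℝ)).add (hi.const_mul t)).add ((he.add he').const_mul _))
  have hpt : ∀ ω, Real.exp (t * ξ ω) ≤ G ω := fun ω => key_pointwise t (ξ ω) ht0 ht
  have hint : Integrable (fun ω => Real.exp (t * ξ ω)) μ := by
    refine hGint.mono' ((hm.const_mul t).exp.aestronglyMeasurable) ?_
    filter_upwards with ω
    rw [Real.norm_eq_abs, abs_of_pos (Real.exp_pos _)]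
    exact hpt ω
  refine ⟨hint, ?_⟩
  have hint1 : Integrable (fun ω => 1 + t * ξ ω) μ := by
    exact (integrable_const (1 : ℝ)).add (hi.const_mul t)
  have hint2 : Integrable (fun ω => 2 * t ^ 2 * (Real.exp (ξ ω) + Real.exp (-(ξ ω)))) μ := by
    exact (he.add he').const_mul _
  have hint3 : Integrable (fun ω => Real.exp (ξ ω) + Real.exp (-(ξ ω))) μ := he.add he'
  have hGeq : ∫ ω, G ω ∂μ = 1 + t * (∫ ω, ξ ω ∂μ)
      + 2 * t ^ 2 * ((∫ ω, Real.exp (ξ ω) ∂μ) + ∫ ω, Real.exp (-(ξ ω)) ∂μ) := by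
    rw [hG]
    rw [integral_add hint1 hint2, integral_add (integrable_const (1 : ℝ)) (hi.const_mul t),
      integral_const_mul, integral_const_mul, integral_add he he']
    simp
  calc ∫ ω, Real.exp (t * ξ ω) ∂μ ≤ ∫ ω, G ω ∂μ := integral_mono hint hGint hpt
    _ = 1 + 2 * t ^ 2 * ((∫ ω, Real.exp (ξ ω) ∂μ) + ∫ ω, Real.exp (-(ξ ω)) ∂μ) := by
        rw [hGeq, h0]; ring
    _ ≤ 1 + 4 * β * t ^ 2 := by nlinarith [sq_nonneg t]

/-- Upper tail bound for the weighted sum. -/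
private lemma tail_bound {Ω : Type*} [MeasurableSpace Ω] (μ : Measure Ω)
    [IsProbabilityMeasure μ]
    (N : ℕ) (η : Fin N → Ω → ℝ) (β : ℝ) (hβ : 1 ≤ β)
    (hmeas : ∀ k, Measurable (η k))
    (hindep : iIndepFun η μ)
    (hint : ∀ k, Integrable (η k) μ)
    (hzero : ∀ k, ∫ ω, η k ω ∂μ = 0)
    (hexpint : ∀ k, Integrable (fun ω => Real.exp (η k ω)) μ)
    (hexpint' : ∀ k, Integrable (fun ω => Real.exp (-(η k ω))) μ)
    (hmgf : ∀ k, ∫ ω, Real.exp (η k ω) ∂μ ≤ β)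
    (hmgf' : ∀ k, ∫ ω, Real.exp (-(η k ω)) ∂μ ≤ β)
    (a : Fin N → ℝ) (ha : ∀ k, a k ∈ Set.Icc (0 : ℝ) 1)
    (Z : ℝ) (hZ : Z = ∑ k, a k) (hZpos : 0 < Z)
    (lam : ℝ) (hlam0 : 0 < lam) (hlam1 : lam ≤ 1) :
    (μ {ω | lam * Z ≤ ∑ k, a k * η k ω}).toReal
      ≤ Real.exp (-(lam ^ 2) * Z * Real.exp (-(2 * β)) / 4) := by
  set E := Real.exp (-(2 * β)) with hE
  have hEpos : 0 < E := Real.exp_pos _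
  have hE1 : E ≤ 1 := Real.exp_le_one_iff.mpr (by linarith)
  have hEinv : Real.exp (2 * β) * E = 1 := by
    rw [hE, ← Real.exp_add]; norm_num
  set s := lam * E / 2 with hs
  have hs0 : 0 < s := by positivity
  have hshalf : s ≤ 1 / 2 := by nlinarith
  set X : Fin N → Ω → ℝ := fun k ω => a k * η k ω with hX
  have hXmeas : ∀ k, Measurable (X k) := fun k => (hmeas k).const_mul _
  have hXindep : iIndepFun X μ :=
    hindep.comp (fun k x => a k * x) (fun k => measurable_id.const_mul _)
  have h4β : 4 * β ≤ Real.exp (2 * β) := by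
    have h2b : Real.exp (2 * β) = Real.exp β * Real.exp β := by
      rw [← Real.exp_add]; ring_nf
    nlinarith [Real.add_one_le_exp β, sq_nonneg (β - 1)]
  -- per-variable bounds
  have hvar : ∀ k : Fin N, Integrable (fun ω => Real.exp (s * X k ω)) μ ∧
      ∫ ω, Real.exp (s * X k ω) ∂μ ≤ Real.exp (Real.exp (2 * β) * s ^ 2 * a k) := by
    intro k
    obtain ⟨hak0, hak1⟩ := ha k
    have ht0 : 0 ≤ s * a k := by positivity
    have ht : s * a k ≤ 1 / 2 := by
      have := mul_le_mul_of_nonneg_left hak1 hs0.le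
      simpa using this.trans (by simpa using hshalf)
    have h := onevar μ (η k) (hmeas k) (hint k) (hzero k) (hexpint k) (hexpint' k)
      β (hmgf k) (hmgf' k) (s * a k) ht0 ht
    have heq : (fun ω => Real.exp (s * a k * η k ω)) = fun ω => Real.exp (s * X k ω) := by
      funext ω; rw [hX]; ring_nf
    rw [heq] at h
    refine ⟨h.1, h.2.trans ?_⟩
    have hb1 : 1 + 4 * β * (s * a k) ^ 2 ≤ Real.exp (4 * β * (s * a k) ^ 2) :=
      Real.add_one_le_exp _ |>.trans_eq' (by ring)
    refine hb1.trans (Real.exp_le_exp.mpr ?_)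
    have hq : 4 * β * a k ≤ Real.exp (2 * β) := by
      nlinarith [mul_le_mul_of_nonneg_left hak1 (by linarith : (0:ℝ) ≤ 4 * β)]
    calc 4 * β * (s * a k) ^ 2 = (4 * β * a k) * (a k * s ^ 2) := by ring
      _ ≤ Real.exp (2 * β) * (a k * s ^ 2) :=
          mul_le_mul_of_nonneg_right hq (by positivity)
      _ = Real.exp (2 * β) * s ^ 2 * a k := by ring
  -- mgf of the sum
  have hmgfsum : mgf (∑ k, X k) μ s = ∏ k, mgf (X k) μ s :=
    hXindep.mgf_sum hXmeas Finset.univ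
  have hintsum : Integrable (fun ω => Real.exp (s * (∑ k, X k) ω)) μ :=
    hXindep.integrable_exp_mul_sum hXmeas (fun k _ => (hvar k).1)
  have hprod : mgf (∑ k, X k) μ s ≤ Real.exp (Real.exp (2 * β) * s ^ 2 * Z) := by
    rw [hmgfsum]
    calc ∏ k, mgf (X k) μ s
        ≤ ∏ k, Real.exp (Real.exp (2 * β) * s ^ 2 * a k) := by
          apply Finset.prod_le_prod (fun k _ => mgf_nonneg) (fun k _ => (hvar k).2)
      _ = Real.exp (∑ k, Real.exp (2 * β) * s ^ 2 * a k) := (Real.exp_sum _ _).symm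
      _ = Real.exp (Real.exp (2 * β) * s ^ 2 * Z) := by
          rw [← Finset.mul_sum, hZ]
  have hch := measure_ge_le_exp_mul_mgf (μ := μ) (X := ∑ k, X k) (lam * Z) hs0.le hintsum
  have hset : {ω | lam * Z ≤ (∑ k, X k) ω} = {ω | lam * Z ≤ ∑ k, a k * η k ω} := by
    ext ω; simp [hX, Finset.sum_apply]
  rw [hset] at hch
  refine hch.trans ?_
  calc Real.exp (-s * (lam * Z)) * mgf (∑ k, X k) μ s
      ≤ Real.exp (-s * (lam * Z)) * Real.exp (Real.exp (2 * β) * s ^ 2 * Z) :=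
        mul_le_mul_of_nonneg_left hprod (Real.exp_pos _).le
    _ = Real.exp (-s * (lam * Z) + Real.exp (2 * β) * s ^ 2 * Z) := (Real.exp_add _ _).symm
    _ = Real.exp (-(lam ^ 2) * Z * E / 4) := by
        congr 1
        have : Real.exp (2 * β) * s ^ 2 = lam ^ 2 * E / 4 := by
          rw [hs]
          have : Real.exp (2 * β) * (lam * E / 2) ^ 2
              = (Real.exp (2 * β) * E) * (lam ^ 2 * E) / 4 := by ring
          rw [this, hEinv]; ring
        rw [this, hs]; ring

/-- Concentration of a weighted average of i.i.d. mean-zero random variables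
with two-sided exponential moment bound `E[e^{±η}] ≤ β`: for weights `a_k ∈ [0,1]` with
`Z = Σ a_k > 0` and `V = (1/Z) Σ a_k η_k`, for every `λ ∈ (0,1]`,
`P(|V| > λ) ≤ 2 exp(−λ² Z e^{−2β}/4)`. -/
theorem weighted_avg_concentration
    {Ω : Type*} [MeasurableSpace Ω] (μ : Measure Ω) [IsProbabilityMeasure μ]
    (N : ℕ) (η : Fin N → Ω → ℝ) (β : ℝ) (hβ : 1 ≤ β)
    (hmeas : ∀ k, Measurable (η k))
    (hindep : iIndepFun η μ)
    (hident : ∀ j k, IdentDistrib (η j) (η k) μ μ)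
    (hint : ∀ k, Integrable (η k) μ)
    (hzero : ∀ k, ∫ ω, η k ω ∂μ = 0)
    (hexpint : ∀ k, Integrable (fun ω => Real.exp (η k ω)) μ)
    (hexpint' : ∀ k, Integrable (fun ω => Real.exp (-(η k ω))) μ)
    (hmgf : ∀ k, ∫ ω, Real.exp (η k ω) ∂μ ≤ β)
    (hmgf' : ∀ k, ∫ ω, Real.exp (-(η k ω)) ∂μ ≤ β)
    (a : Fin N → ℝ) (ha : ∀ k, a k ∈ Set.Icc (0:ℝ) 1)
    (Z : ℝ) (hZ : Z = ∑ k, a k) (hZpos : 0 < Z)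
    (lam : ℝ) (hlam : lam ∈ Set.Ioc (0:ℝ) 1) :
    μ {ω | lam < |(1 / Z) * ∑ k, a k * η k ω|}
      ≤ ENNReal.ofReal (2 * Real.exp (-(lam ^ 2) * Z * Real.exp (-(2 * β)) / 4)) := by
  obtain ⟨hlam0, hlam1⟩ := hlam
  set R := Real.exp (-(lam ^ 2) * Z * Real.exp (-(2 * β)) / 4) with hR
  -- upper tail
  have hup : (μ {ω | lam * Z ≤ ∑ k, a k * η k ω}).toReal ≤ R :=
    tail_bound μ N η β hβ hmeas hindep hint hzero hexpint hexpint' hmgf hmgf'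
      a ha Z hZ hZpos lam hlam0 hlam1
  -- lower tail: apply to -η
  have hdown : (μ {ω | lam * Z ≤ ∑ k, a k * (-(η k ·)) ω}).toReal ≤ R := by
    refine tail_bound μ N (fun k ω => -(η k ω)) β hβ (fun k => (hmeas k).neg)
      (hindep.comp (fun k x => -x) (fun k => measurable_neg)) (fun k => (hint k).neg)
      (fun k => by rw [integral_neg, hzero k, neg_zero])
      (fun k => hexpint' k) (fun k => by simpa using hexpint k)
      (fun k => hmgf' k) (fun k => by simpa using hmgf k)
      a ha Z hZ hZpos lam hlam0 hlam1
  have hdown' : (μ {ω | lam * Z ≤ -∑ k, a k * η k ω}).toReal ≤ R := by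
    have hseteq : {ω | lam * Z ≤ ∑ k, a k * (-(η k ·)) ω}
        = {ω | lam * Z ≤ -∑ k, a k * η k ω} := by
      ext ω
      simp [mul_neg, Finset.sum_neg_distrib]
    rwa [hseteq] at hdown
  -- set inclusion
  have hsub : {ω | lam < |(1 / Z) * ∑ k, a k * η k ω|}
      ⊆ {ω | lam * Z ≤ ∑ k, a k * η k ω} ∪ {ω | lam * Z ≤ -∑ k, a k * η k ω} := by
    intro ω hω
    simp only [Set.mem_setOf_eq] at hω
    set W := ∑ k, a k * η k ω with hW
    have habs : lam * Z < |W| := by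
      have h1 : |(1 / Z) * W| = |W| / Z := by
        rw [abs_mul, abs_of_pos (by positivity : (0 : ℝ) < 1 / Z)]; ring
      rw [h1] at hω
      exact (lt_div_iff₀ hZpos).mp hω
    rcases abs_cases W with ⟨he, _⟩ | ⟨he, _⟩
    · left; rw [Set.mem_setOf_eq, ← hW]; rw [he] at habs; linarith
    · right; rw [Set.mem_setOf_eq, ← hW]; rw [he] at habs; linarith
  have hRnn : 0 ≤ R := Real.exp_nonneg _
  calc μ {ω | lam < |(1 / Z) * ∑ k, a k * η k ω|}
      ≤ μ ({ω | lam * Z ≤ ∑ k, a k * η k ω} ∪ {ω | lam * Z ≤ -∑ k, a k * η k ω}) :=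
        measure_mono hsub
    _ ≤ μ {ω | lam * Z ≤ ∑ k, a k * η k ω} + μ {ω | lam * Z ≤ -∑ k, a k * η k ω} :=
        measure_union_le _ _
    _ ≤ ENNReal.ofReal R + ENNReal.ofReal R := by
        refine add_le_add ?_ ?_
        · rw [← ENNReal.ofReal_toReal (measure_ne_top μ _)]
          exact ENNReal.ofReal_le_ofReal hup
        · rw [← ENNReal.ofReal_toReal (measure_ne_top μ _)]
          exact ENNReal.ofReal_le_ofReal hdown'
    _ = ENNReal.ofReal (2 * R) := by
        rw [← ENNReal.ofReal_add hRnn hRnn]; congr 1; ring
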